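/- There exists a unique φ* ∈ (0, π) satisfying tan(φ*/2) = φ*. The function f(φ) = φ / sin²(φ/2) attains a strict global minimum on the interval (0, π] at φ = φ*, and moreover 0.74·π < φ* < 0.745·π. (This φ* ≈ 0.742π is the angle minimizing the average energy cost φ₀ · csc²(φ₀/2) of the probabilistic counter-diabatic quantum gate implementation.) -/

import Mathlib

open Real

open Set

set_option maxHeartbeats 1000000

noncomputable def hfun (x : ℝ) : ℝ := Real.tan x - 2 * x

lemma hfun_hasDerivAt {x : ℝ} (hx : Real.cos x ≠ 0) :
    HasDerivAt hfun (1 / Real.cos x ^ 2 - 2) x := by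
  have h1 : HasDerivAt (fun y : ℝ => 2 * y) 2 x := by
    simpa using (hasDerivAt_id x).const_mul 2
  exact (Real.hasDerivAt_tan hx).sub h1

lemma hfun_cont {x : ℝ} (hx : Real.cos x ≠ 0) : ContinuousAt hfun x :=
  (Real.continuousAt_tan.2 hx).sub (continuousAt_const.mul continuousAt_id)

lemma hfun_anti : StrictAntiOn hfun (Icc 0 (π/4)) := by
  have hpi := Real.pi_gt_three
  apply strictAntiOn_of_deriv_neg (convex_Icc _ _)
  · intro x hx
    refine (hfun_cont ?_).continuousWithinAt
    have : Real.cos x > 0 := Real.cos_pos_of_mem_Ioo ⟨by linarith [hx.1], by linarith [hx.2]⟩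
    linarith
  · intro x hx
    rw [interior_Icc] at hx
    have hc2 : Real.cos (π/4) < Real.cos x :=
      Real.cos_lt_cos_of_nonneg_of_le_pi (le_of_lt hx.1) (by linarith [hx.2]) hx.2
    rw [Real.cos_pi_div_four] at hc2
    have hs2 : (0:ℝ) < Real.sqrt 2 / 2 := by positivity
    have hcpos : 0 < Real.cos x := by linarith
    have hcsq : 1/2 < Real.cos x ^ 2 := by
      nlinarith [Real.sq_sqrt (by norm_num : (2:ℝ) ≥ 0)]
    rw [(hfun_hasDerivAt (ne_of_gt hcpos)).deriv]
    have : 1 / Real.cos x ^ 2 < 2 := by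
      rw [div_lt_iff₀ (by positivity)]; linarith
    linarith

lemma hfun_mono : StrictMonoOn hfun (Ico (π/4) (π/2)) := by
  have hpi := Real.pi_gt_three
  apply strictMonoOn_of_deriv_pos (convex_Ico _ _)
  · intro x hx
    refine (hfun_cont ?_).continuousWithinAt
    have : Real.cos x > 0 := Real.cos_pos_of_mem_Ioo ⟨by linarith [hx.1], hx.2⟩
    linarith
  · intro x hx
    rw [interior_Ico] at hx
    have hcpos : 0 < Real.cos x := Real.cos_pos_of_mem_Ioo ⟨by linarith [hx.1], hx.2⟩
    have hc2 : Real.cos x < Real.cos (π/4) :=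
      Real.cos_lt_cos_of_nonneg_of_le_pi (by positivity) (by linarith [hx.2]) hx.1
    rw [Real.cos_pi_div_four] at hc2
    have hcsq : Real.cos x ^ 2 < 1/2 := by
      nlinarith [Real.sq_sqrt (by norm_num : (2:ℝ) ≥ 0), Real.sqrt_nonneg 2]
    rw [(hfun_hasDerivAt (ne_of_gt hcpos)).deriv]
    have : 2 < 1 / Real.cos x ^ 2 := by
      rw [lt_div_iff₀ (by positivity)]; linarith
    linarith

lemma numA : Real.cos (0.13 * π) < 0.74 * π * Real.sin (0.13 * π) := by
  have hpl : (3.141592 : ℝ) < π := Real.pi_gt_d6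
  have hpu : π < (3.141593 : ℝ) := Real.pi_lt_d6
  set u : ℝ := 0.13 * π with hu
  have hu1 : (0.4084069 : ℝ) < u := by rw [hu]; linarith
  have hu2 : u < (0.4084071 : ℝ) := by rw [hu]; linarith
  have hu0 : (0:ℝ) < u := by linarith
  have habs : |u| ≤ 1 := by rw [abs_of_pos hu0]; linarith
  have hsq1 : (0.1667962 : ℝ) < u^2 := by nlinarith
  have hsq2 : u^2 < (0.1667964 : ℝ) := by nlinarith
  have hcu : u^3 < (0.0681209 : ℝ) := by nlinarith
  have hq : u^4 < (0.0278211 : ℝ) := by nlinarith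
  have hq0 : (0:ℝ) ≤ u^4 := by positivity
  have hcos := abs_le.1 (Real.cos_bound habs)
  have hsin := abs_le.1 (Real.sin_bound habs)
  rw [abs_of_pos hu0] at hcos hsin
  have hcosu : Real.cos u < 0.9180509 := by nlinarith [hcos.2]
  have hsinu : (0.3956044 : ℝ) < Real.sin u := by nlinarith [hsin.1]
  have : (0.919 : ℝ) < 0.74 * π * Real.sin u := by nlinarith
  linarith

lemma numB : 0.745 * π * Real.sin (0.1275 * π) < Real.cos (0.1275 * π) := by
  have hpl : (3.141592 : ℝ) < π := Real.pi_gt_d6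
  have hpu : π < (3.141593 : ℝ) := Real.pi_lt_d6
  set v : ℝ := 0.1275 * π with hv
  have hv1 : (0.4005529 : ℝ) < v := by rw [hv]; linarith
  have hv2 : v < (0.4005532 : ℝ) := by rw [hv]; linarith
  have hv0 : (0:ℝ) < v := by linarith
  have habs : |v| ≤ 1 := by rw [abs_of_pos hv0]; linarith
  have hsq1 : (0.1604426 : ℝ) < v^2 := by nlinarith
  have hsq2 : v^2 < (0.1604428 : ℝ) := by nlinarith
  have hcu1 : (0.0642657 : ℝ) < v^3 := by nlinarith
  have hq : v^4 < (0.0257419 : ℝ) := by nlinarith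
  have hq0 : (0:ℝ) ≤ v^4 := by positivity
  have hcos := abs_le.1 (Real.cos_bound habs)
  have hsin := abs_le.1 (Real.sin_bound habs)
  rw [abs_of_pos hv0] at hcos hsin
  have hcosv : (0.9184378 : ℝ) < Real.cos v := by nlinarith [hcos.1]
  have hsinv : Real.sin v < (0.391183 : ℝ) := by nlinarith [hsin.2]
  have hs0 : (0:ℝ) < Real.sin v := by nlinarith [hsin.1]
  have : 0.745 * π * Real.sin v < (0.916 : ℝ) := by nlinarith
  linarith

lemma hfun_a_neg : hfun (0.37 * π) < 0 := by
  have hpl : (3.141592 : ℝ) < π := Real.pi_gt_d6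
  have e1 : (0.37:ℝ) * π = π/2 - 0.13 * π := by ring
  have hcpos : 0 < Real.cos (0.37 * π) := by
    rw [e1, Real.cos_pi_div_two_sub]
    apply Real.sin_pos_of_pos_of_lt_pi <;> nlinarith
  have hnum : Real.sin (0.37 * π) < 2 * (0.37 * π) * Real.cos (0.37 * π) := by
    rw [e1, Real.sin_pi_div_two_sub, Real.cos_pi_div_two_sub]
    have := numA
    have h74 : 2 * (π/2 - 0.13*π) = 0.74 * π := by ring
    rw [h74]
    exact numA
  unfold hfun
  rw [Real.tan_eq_sin_div_cos, sub_neg, div_lt_iff₀ hcpos]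
  linarith

lemma hfun_b_pos : 0 < hfun (0.3725 * π) := by
  have hpl : (3.141592 : ℝ) < π := Real.pi_gt_d6
  have e1 : (0.3725:ℝ) * π = π/2 - 0.1275 * π := by ring
  have hcpos : 0 < Real.cos (0.3725 * π) := by
    rw [e1, Real.cos_pi_div_two_sub]
    apply Real.sin_pos_of_pos_of_lt_pi <;> nlinarith
  have hnum : 2 * (0.3725 * π) * Real.cos (0.3725 * π) < Real.sin (0.3725 * π) := by
    rw [e1, Real.sin_pi_div_two_sub, Real.cos_pi_div_two_sub]
    have h745 : 2 * (π/2 - 0.1275*π) = 0.745 * π := by ring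
    rw [h745]
    exact numB
  unfold hfun
  rw [Real.tan_eq_sin_div_cos, sub_pos, lt_div_iff₀ hcpos]
  linarith

/-- There exists a unique `φ* ∈ (0, π)` with `tan(φ*/2) = φ*`; the function
`f(φ) = φ / sin²(φ/2)` attains a strict global minimum on `(0, π]` at `φ*`, and
`0.74·π < φ* < 0.745·π`.  This `φ* ≈ 0.742π` minimizes the average energy cost
`φ₀ · csc²(φ₀/2)` of the probabilistic counter-diabatic gate implementation. -/
theorem optimal_probabilistic_gate_angle :
    ∃ φstar : ℝ,
      (φstar ∈ Set.Ioo 0 Real.pi ∧ Real.tan (φstar / 2) = φstar) ∧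
      (∀ ψ : ℝ, ψ ∈ Set.Ioo 0 Real.pi → Real.tan (ψ / 2) = ψ → ψ = φstar) ∧
      (∀ ψ : ℝ, ψ ∈ Set.Ioc 0 Real.pi → ψ ≠ φstar →
        φstar / Real.sin (φstar / 2) ^ 2 < ψ / Real.sin (ψ / 2) ^ 2) ∧
      0.74 * Real.pi < φstar ∧ φstar < 0.745 * Real.pi := by
  have hpl : (3.141592 : ℝ) < π := Real.pi_gt_d6
  have hpu : π < (3.141593 : ℝ) := Real.pi_lt_d6
  set a : ℝ := 0.37 * π with ha
  set b : ℝ := 0.3725 * π with hb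
  have hab : a < b := by rw [ha, hb]; nlinarith
  have ha4 : π/4 < a := by rw [ha]; nlinarith
  have hb2 : b < π/2 := by rw [hb]; nlinarith
  -- root of hfun in (a, b)
  have hcont : ContinuousOn hfun (Icc a b) := by
    intro x hx
    refine (hfun_cont ?_).continuousWithinAt
    have : 0 < Real.cos x :=
      Real.cos_pos_of_mem_Ioo ⟨by linarith [hx.1], by linarith [hx.2]⟩
    linarith
  have hivt := intermediate_value_Ioo (le_of_lt hab) hcont
  have h0mem : (0:ℝ) ∈ Ioo (hfun a) (hfun b) := ⟨hfun_a_neg, hfun_b_pos⟩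
  obtain ⟨xs, hxs, hroot⟩ := hivt h0mem
  have hxs1 : a < xs := hxs.1
  have hxs2 : xs < b := hxs.2
  have hxs0 : 0 < xs := by linarith
  have hxs4 : π/4 < xs := by linarith
  have hxsh : xs < π/2 := by linarith
  -- sign of hfun on (0, π/2)
  have hsign_neg : ∀ x, 0 < x → x < xs → hfun x < 0 := by
    intro x hx1 hx2
    rcases le_or_gt x (π/4) with hc | hc
    · have := hfun_anti (left_mem_Icc.2 (by linarith)) ⟨le_of_lt hx1, hc⟩ hx1
      simpa [hfun, Real.tan_zero] using this
    · have := hfun_mono (⟨le_of_lt hc, by linarith⟩ : x ∈ Ico (π/4) (π/2))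
        (⟨le_of_lt hxs4, hxsh⟩ : xs ∈ Ico (π/4) (π/2)) hx2
      rw [hroot] at this; exact this
  have hsign_pos : ∀ x, xs < x → x < π/2 → 0 < hfun x := by
    intro x hx1 hx2
    have := hfun_mono (⟨le_of_lt hxs4, hxsh⟩ : xs ∈ Ico (π/4) (π/2))
      (⟨by linarith, hx2⟩ : x ∈ Ico (π/4) (π/2)) hx1
    rw [hroot] at this; exact this
  -- the minimizer
  set φs : ℝ := 2 * xs with hφs
  have hφs0 : 0 < φs := by rw [hφs]; linarith
  have hφsπ : φs < π := by rw [hφs]; nlinarith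
  have hhalf : φs / 2 = xs := by rw [hφs]; ring
  have htan : Real.tan (φs / 2) = φs := by
    have : Real.tan xs - 2 * xs = 0 := hroot
    rw [hhalf, hφs]; linarith
  -- F and its derivative
  set F : ℝ → ℝ := fun φ => φ / Real.sin (φ/2) ^ 2 with hF
  have hsinpos : ∀ φ : ℝ, 0 < φ → φ ≤ π → 0 < Real.sin (φ/2) := by
    intro φ h1 h2
    apply Real.sin_pos_of_pos_of_lt_pi <;> [linarith; linarith]
  have hderiv : ∀ φ : ℝ, 0 < φ → φ ≤ π →
      HasDerivAt F ((Real.sin (φ/2)^2 - φ * (Real.sin (φ/2) * Real.cos (φ/2))) /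
        (Real.sin (φ/2)^2)^2) φ := by
    intro φ h1 h2
    have hs := hsinpos φ h1 h2
    have hd1 : HasDerivAt (fun φ : ℝ => φ/2) (1/2) φ := (hasDerivAt_id φ).div_const 2
    have hd2 : HasDerivAt (fun φ : ℝ => Real.sin (φ/2)) (Real.cos (φ/2) * (1/2)) φ :=
      hd1.sin
    have hd3 : HasDerivAt (fun φ : ℝ => Real.sin (φ/2) ^ 2)
        (2 * Real.sin (φ/2) ^ 1 * (Real.cos (φ/2) * (1/2))) φ := hd2.pow 2
    have hd4 : HasDerivAt (fun φ : ℝ => id φ / Real.sin (φ/2) ^ 2)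
        ((1 * Real.sin (φ/2) ^ 2 - id φ * (2 * Real.sin (φ/2) ^ 1 * (Real.cos (φ/2) * (1/2)))) /
          (Real.sin (φ/2) ^ 2) ^ 2) φ := (hasDerivAt_id φ).div hd3 (by positivity)
    convert hd4 using 1
    · exact hF
    simp only [id_eq, pow_one]
    ring
  -- sign of numerator: sin(φ/2) - φ cos(φ/2) = cos(φ/2) * hfun(φ/2) for φ ∈ (0, π)
  have hnum_eq : ∀ φ : ℝ, 0 < φ → φ < π →
      Real.sin (φ/2) - φ * Real.cos (φ/2) = Real.cos (φ/2) * hfun (φ/2) := by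
    intro φ h1 h2
    have hc : 0 < Real.cos (φ/2) :=
      Real.cos_pos_of_mem_Ioo ⟨by linarith, by linarith⟩
    unfold hfun
    rw [Real.tan_eq_sin_div_cos]
    field_simp
  have hantideriv : ∀ φ ∈ Ioo (0:ℝ) φs, deriv F φ < 0 := by
    intro φ hφ
    have h1 := hφ.1; have h2 := hφ.2
    have hπ : φ < π := by linarith
    have hs := hsinpos φ h1 (le_of_lt hπ)
    have hc : 0 < Real.cos (φ/2) :=
      Real.cos_pos_of_mem_Ioo ⟨by linarith, by linarith⟩
    rw [(hderiv φ h1 (le_of_lt hπ)).deriv]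
    have hh : hfun (φ/2) < 0 := hsign_neg (φ/2) (by linarith) (by rw [← hhalf]; linarith)
    have := hnum_eq φ h1 hπ
    have hnum : Real.sin (φ/2)^2 - φ * (Real.sin (φ/2) * Real.cos (φ/2)) < 0 := by
      have : Real.sin (φ/2) * (Real.sin (φ/2) - φ * Real.cos (φ/2)) < 0 := by
        apply mul_neg_of_pos_of_neg hs
        rw [this]; exact mul_neg_of_pos_of_neg hc hh
      nlinarith [this]
    apply div_neg_of_neg_of_pos hnum (by positivity)
  have hmonoderiv : ∀ φ ∈ Ioo φs π, 0 < deriv F φ := by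
    intro φ hφ
    have h1 : 0 < φ := by linarith [hφ.1]
    have hπ : φ < π := hφ.2
    have hs := hsinpos φ h1 (le_of_lt hπ)
    have hc : 0 < Real.cos (φ/2) :=
      Real.cos_pos_of_mem_Ioo ⟨by linarith, by linarith⟩
    rw [(hderiv φ h1 (le_of_lt hπ)).deriv]
    have hh : 0 < hfun (φ/2) := hsign_pos (φ/2) (by rw [← hhalf]; linarith [hφ.1]) (by linarith)
    have := hnum_eq φ h1 hπ
    have hnum : 0 < Real.sin (φ/2)^2 - φ * (Real.sin (φ/2) * Real.cos (φ/2)) := by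
      have : 0 < Real.sin (φ/2) * (Real.sin (φ/2) - φ * Real.cos (φ/2)) := by
        apply mul_pos hs
        rw [this]; exact mul_pos hc hh
      nlinarith [this]
    exact div_pos hnum (by positivity)
  have hFcont : ∀ φ : ℝ, 0 < φ → φ ≤ π → ContinuousAt F φ := by
    intro φ h1 h2
    have hs := hsinpos φ h1 h2
    exact ContinuousAt.div continuousAt_id
      (((Real.continuous_sin.comp (continuous_id.div_const 2)).pow 2).continuousAt)
      (by positivity)
  have hFanti : StrictAntiOn F (Ioc 0 φs) := by
    apply strictAntiOn_of_deriv_neg (convex_Ioc _ _)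
    · intro φ hφ
      exact (hFcont φ hφ.1 (by linarith [hφ.2])).continuousWithinAt
    · rw [interior_Ioc]; exact hantideriv
  have hFmono : StrictMonoOn F (Icc φs π) := by
    apply strictMonoOn_of_deriv_pos (convex_Icc _ _)
    · intro φ hφ
      exact (hFcont φ (by linarith [hφ.1]) hφ.2).continuousWithinAt
    · rw [interior_Icc]; exact hmonoderiv
  refine ⟨φs, ⟨⟨hφs0, hφsπ⟩, htan⟩, ?_, ?_, ?_, ?_⟩
  · -- uniqueness
    intro ψ hψ htψ
    have hψ2 : hfun (ψ/2) = 0 := by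
      unfold hfun; rw [htψ]; ring
    rcases lt_trichotomy (ψ/2) xs with hc | hc | hc
    · exfalso
      have := hsign_neg (ψ/2) (by linarith [hψ.1]) hc
      linarith
    · linarith [hc, hhalf]
    · exfalso
      have := hsign_pos (ψ/2) hc (by linarith [hψ.2])
      linarith
  · -- strict minimum
    intro ψ hψ hne
    rcases lt_or_gt_of_ne hne with hc | hc
    · exact hFanti ⟨hψ.1, le_of_lt hc⟩ ⟨hφs0, le_refl _⟩ hc
    · exact hFmono ⟨le_refl _, le_of_lt hφsπ⟩ ⟨le_of_lt hc, hψ.2⟩ hc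
  · rw [hφs]; nlinarith
  · rw [hφs]; nlinarith
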